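/- For A ∈ SL(2,ℝ) with eigenvalues λ, 1/λ, the translation length of the Möbius action of A on the hyperbolic upper half-plane equals 2·sqrt(w(P_A)), where P_A is the characteristic polynomial of A and w denotes the Jensen square sum. -/

import Mathlib

open UpperHalfPlane Matrix MatrixGroups Polynomial

/-- The Jensen square sum of a (monic) complex polynomial:
the sum of `log² max(1, |λ|)` over its roots with multiplicity. -/
noncomputable def jensenSquareSum (Q : Polynomial ℂ) : ℝ :=
  (Q.roots.map fun l => (Real.log (max 1 ‖l‖)) ^ 2).sum

namespace TransLenAux

lemma normSq_q (a b c d : ℝ) (hdet : a*d - b*c = 1) (z : ℂ) :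
    Complex.normSq ((c:ℂ)*z^2 + ((d:ℂ)-a)*z - b)
      = ((a+d)^2 - 4)*z.im^2 + (c*z.re^2 + (d-a)*z.re - b + c*z.im^2)^2 := by
  simp only [Complex.normSq_apply, Complex.add_re, Complex.add_im, Complex.sub_re, Complex.sub_im,
    Complex.mul_re, Complex.mul_im, Complex.ofReal_re, Complex.ofReal_im, pow_two]
  ring_nf
  linear_combination (-4*z.im^2) * hdet

lemma qlow (a b c d : ℝ) (hdet : a*d - b*c = 1) (z : ℂ) (hz : 0 < z.im) :
    Real.sqrt (max 0 ((a+d)^2-4)) / 2 ≤ ‖(c:ℂ)*z^2 + ((d:ℂ)-a)*z - b‖ / (2*z.im) := by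
  set s := Real.sqrt (max 0 ((a+d)^2-4)) with hs
  have hs0 : 0 ≤ s := Real.sqrt_nonneg _
  have key : s * z.im ≤ ‖(c:ℂ)*z^2 + ((d:ℂ)-a)*z - b‖ := by
    have h1 : (s * z.im)^2 ≤ ‖(c:ℂ)*z^2 + ((d:ℂ)-a)*z - b‖ ^ 2 := by
      rw [Complex.sq_norm]
      have hss : s^2 = max 0 ((a+d)^2-4) := Real.sq_sqrt (le_max_left _ _)
      rw [mul_pow, hss]
      rcases le_total ((a+d)^2-4) 0 with h | h
      · rw [max_eq_left h, zero_mul]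
        exact Complex.normSq_nonneg _
      · rw [max_eq_right h, normSq_q a b c d hdet z]
        nlinarith [sq_nonneg (c*z.re^2 + (d-a)*z.re - b + c*z.im^2)]
    have := Real.sqrt_le_sqrt h1
    rwa [Real.sqrt_sq (by positivity), Real.sqrt_sq (norm_nonneg _)] at this
  rw [div_le_div_iff₀ (by norm_num) (by linarith)]
  linarith [key]

lemma core (a b c d : ℝ) (hdet : a*d - b*c = 1) {ε : ℝ} (hε : 0 < ε) :
    ∃ x y : ℝ, 0 < y ∧
      Real.sqrt (((a+d)^2-4)*y^2 + (c*x^2+(d-a)*x-b+c*y^2)^2) / (2*y)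
        < Real.sqrt (max 0 ((a+d)^2-4)) / 2 + ε := by
  set D := (a+d)^2-4 with hDdef
  have hD : D = (a-d)^2 + 4*(b*c) := by rw [hDdef]; linear_combination 4*hdet
  rcases eq_or_ne c 0 with hc | hc
  · rcases eq_or_ne a d with had | had
    · -- c = 0, a = d : D = 0, constant -b
      have hD0 : D = 0 := by rw [hD, hc, had]; ring
      refine ⟨0, (|b|+1)/ε, by positivity, ?_⟩
      rw [hD0]
      have h1 : Real.sqrt (0*((|b|+1)/ε)^2 + (c*0^2+(d-a)*0-b+c*((|b|+1)/ε)^2)^2) = |b| := by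
        rw [hc]; ring_nf; rw [Real.sqrt_sq_eq_abs]
      rw [h1]
      have : Real.sqrt (max 0 (0:ℝ)) = 0 := by simp
      rw [this]
      rw [div_lt_iff₀ (by positivity)]
      have : 2 * ((|b| + 1) / ε) * ε = 2*(|b|+1) := by field_simp
      nlinarith [abs_nonneg b]
    · -- c = 0, a ≠ d : D = (a-d)^2 > 0
      have hD0 : D = (a-d)^2 := by rw [hD, hc]; ring
      have hDpos : 0 < D := by
        rw [hD0]
        have h' := sub_ne_zero.mpr had
        exact lt_of_le_of_ne (sq_nonneg _) (Ne.symm (pow_ne_zero 2 h'))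
      refine ⟨b/(d-a), 1, one_pos, ?_⟩
      have hda : d - a ≠ 0 := fun h => had (by linarith [h])
      have h2 : c*(b/(d-a))^2+(d-a)*(b/(d-a))-b+c*1^2 = 0 := by
        rw [hc]; field_simp; ring
      rw [h2]
      have h3 : Real.sqrt (D*1^2 + 0^2) = Real.sqrt (max 0 D) := by
        rw [max_eq_right hDpos.le]; ring_nf
      rw [h3]
      linarith [Real.sqrt_nonneg (max 0 D)]
  · -- c ≠ 0
    have hx : c*((a-d)/(2*c))^2+(d-a)*((a-d)/(2*c))-b = -D/(4*c) := by
      rw [hD]; field_simp; ring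
    rcases lt_trichotomy D 0 with hD0 | hD0 | hD0
    · -- D < 0
      refine ⟨(a-d)/(2*c), Real.sqrt (-D)/(2*|c|),
        div_pos (Real.sqrt_pos.mpr (by linarith)) (mul_pos two_pos (abs_pos.mpr hc)), ?_⟩
      have hy2 : (Real.sqrt (-D)/(2*|c|))^2 = -D/(4*c^2) := by
        rw [div_pow, Real.sq_sqrt (by linarith)]
        congr 1
        rw [mul_pow, _root_.sq_abs]; norm_num
      have hE : D*(Real.sqrt (-D)/(2*|c|))^2
          + (c*((a-d)/(2*c))^2+(d-a)*((a-d)/(2*c))-b+c*(Real.sqrt (-D)/(2*|c|))^2)^2 = 0 := by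
        rw [hx, hy2]; field_simp; ring
      rw [hE, Real.sqrt_zero, zero_div]
      positivity
    · -- D = 0
      refine ⟨(a-d)/(2*c), ε/|c|, div_pos hε (abs_pos.mpr hc), ?_⟩
      have habs : (0:ℝ) < |c| := abs_pos.mpr hc
      have hE : D*(ε/|c|)^2
          + (c*((a-d)/(2*c))^2+(d-a)*((a-d)/(2*c))-b+c*(ε/|c|)^2)^2 = (c*(ε/|c|)^2)^2 := by
        rw [hx, hD0]; ring_nf
      rw [hE, Real.sqrt_sq_eq_abs, hD0]
      have h5 : |c*(ε/|c|)^2| = ε^2/|c| := by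
        rw [abs_mul, abs_of_nonneg (by positivity : (0:ℝ) ≤ (ε/|c|)^2), div_pow, _root_.sq_abs]
        field_simp
        linear_combination _root_.abs_mul_abs_self c
      rw [h5]
      have h6 : ε^2/|c| / (2*(ε/|c|)) = ε/2 := by field_simp
      rw [h6]
      simp
      linarith
    · -- D > 0
      refine ⟨(a-d)/(2*c), Real.sqrt D/(2*|c|),
        div_pos (Real.sqrt_pos.mpr hD0) (mul_pos two_pos (abs_pos.mpr hc)), ?_⟩
      have habs : (0:ℝ) < |c| := abs_pos.mpr hc
      have hy2 : (Real.sqrt D/(2*|c|))^2 = D/(4*c^2) := by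
        rw [div_pow, Real.sq_sqrt hD0.le]
        congr 1
        rw [mul_pow, _root_.sq_abs]; norm_num
      have hE : D*(Real.sqrt D/(2*|c|))^2
          + (c*((a-d)/(2*c))^2+(d-a)*((a-d)/(2*c))-b+c*(Real.sqrt D/(2*|c|))^2)^2
          = (Real.sqrt D * (Real.sqrt D/(2*|c|)))^2 := by
        rw [hx, hy2, mul_pow, Real.sq_sqrt hD0.le]
        field_simp
        rw [Real.sq_sqrt hD0.le, _root_.sq_abs]
        ring
      rw [hE, Real.sqrt_sq_eq_abs, abs_of_nonneg (by positivity), max_eq_right hD0.le]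
      have h7 : Real.sqrt D * (Real.sqrt D/(2*|c|)) / (2*(Real.sqrt D/(2*|c|)))
          = Real.sqrt D / 2 := by
        have : Real.sqrt D/(2*|c|) ≠ 0 := by
          have := div_pos (Real.sqrt_pos.mpr hD0) (mul_pos two_pos (abs_pos.mpr hc))
          exact ne_of_gt this
        field_simp
      rw [h7]
      linarith

lemma qex (a b c d : ℝ) (hdet : a*d - b*c = 1) {ε : ℝ} (hε : 0 < ε) :
    ∃ z : ℍ, ‖(c:ℂ)*(z:ℂ)^2 + ((d:ℂ)-a)*(z:ℂ) - b‖ / (2*z.im)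
      < Real.sqrt (max 0 ((a+d)^2-4)) / 2 + ε := by
  obtain ⟨x, y, hy, hlt⟩ := core a b c d hdet hε
  have him : ((x:ℂ) + (y:ℂ)*Complex.I).im = y := by simp
  have hre : ((x:ℂ) + (y:ℂ)*Complex.I).re = x := by simp
  refine ⟨UpperHalfPlane.mk ((x:ℂ) + (y:ℂ)*Complex.I) (by rw [him]; exact hy), ?_⟩
  rw [UpperHalfPlane.coe_mk, UpperHalfPlane.mk_im, him]
  have habs : ‖(c:ℂ)*((x:ℂ) + (y:ℂ)*Complex.I)^2 + ((d:ℂ)-a)*((x:ℂ) + (y:ℂ)*Complex.I) - b‖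
      = Real.sqrt (((a+d)^2-4)*y^2 + (c*x^2+(d-a)*x-b+c*y^2)^2) := by
    rw [Complex.norm_def, normSq_q a b c d hdet, him, hre]
  rw [habs]
  exact hlt

lemma dist_smul_eq (A : SL(2,ℝ)) (z : ℍ) :
    dist z (A • z) = 2 * Real.arsinh
      (‖(A 1 0 : ℂ) * (z:ℂ)^2 + ((A 1 1 : ℂ) - (A 0 0 : ℂ)) * z - (A 0 1 : ℂ)‖
        / (2 * z.im)) := by
  have hdet : A 0 0 * A 1 1 - A 0 1 * A 1 0 = 1 := by
    have := A.2
    rw [Matrix.det_fin_two] at this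
    exact this
  set a : ℝ := A 0 0
  set b : ℝ := A 0 1
  set c : ℝ := A 1 0
  set d : ℝ := A 1 1
  have hz : 0 < z.im := z.2
  have hden : ((c:ℂ) * z + d) ≠ 0 := by
    intro h
    have him : c * z.im = 0 := by
      have := congrArg Complex.im h
      simpa using this
    have hc : c = 0 := by
      rcases mul_eq_zero.1 him with h' | h'
      · exact h'
      · exact absurd h' (ne_of_gt hz)
    have hd : (d:ℂ) = 0 := by simpa [hc] using h
    have : d = 0 := by exact_mod_cast hd
    rw [hc, this] at hdet; simp at hdet
  have hcoe : ((A • z : ℍ) : ℂ) = ((a:ℂ) * z + b) / ((c:ℂ) * z + d) := by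
    have h := UpperHalfPlane.specialLinearGroup_apply A z
    rw [h]
    simp [UpperHalfPlane.coe_mk]
    rfl
  have him : (A • z).im = z.im / Complex.normSq ((c:ℂ) * z + d) := by
    have h1 : (A • z).im = (((a:ℂ) * z + b) / ((c:ℂ) * z + d)).im := by
      rw [← hcoe]; rfl
    rw [h1, Complex.div_im]
    have hns : Complex.normSq ((c:ℂ) * z + d) ≠ 0 := by
      simpa using hden
    rw [← sub_div]
    congr 1
    simp
    ring_nf
    linear_combination z.im * hdet
  have habs : ‖(c:ℂ) * z + d‖ ≠ 0 := by
    simpa using hden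
  have habs' : 0 < ‖(c:ℂ) * z + d‖ := by
    positivity
  rw [UpperHalfPlane.dist_eq]
  congr 1
  have hq : (z:ℂ) - ((a:ℂ) * z + b) / ((c:ℂ) * z + d)
      = ((c:ℂ) * (z:ℂ)^2 + ((d:ℂ) - a) * z - b) / ((c:ℂ) * z + d) := by
    rw [sub_div' hden]
    ring
  have hd1 : dist (z:ℂ) ((A • z : ℍ) : ℂ)
      = ‖(c:ℂ) * (z:ℂ)^2 + ((d:ℂ) - a) * z - b‖ / ‖(c:ℂ) * z + d‖ := by
    rw [Complex.dist_eq, hcoe, hq, Complex.norm_div]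
  have hd2 : Real.sqrt (z.im * (A • z).im) = z.im / ‖(c:ℂ) * z + d‖ := by
    rw [him]
    rw [Complex.normSq_eq_norm_sq]
    rw [show z.im * (z.im / ‖(c:ℂ) * z + d‖ ^ 2)
        = (z.im / ‖(c:ℂ) * z + d‖)^2 by field_simp]
    exact Real.sqrt_sq (by positivity)
  rw [hd1, hd2]
  congr 1
  field_simp

lemma jss_eq (T l m : ℂ) (hsum : l + m = T) (hprod : l * m = 1) :
    jensenSquareSum ((X:ℂ[X])^2 - C T * X + C 1)
      = (Real.log (max 1 (‖l‖)))^2 + (Real.log (max 1 (‖m‖)))^2 := by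
  have hfact : ((X:ℂ[X])^2 - C T * X + C 1) = (X - C l) * (X - C m) := by
    rw [← hsum, ← hprod, C_add, C_mul]
    ring
  have hroots : ((X:ℂ[X])^2 - C T * X + C 1).roots = {l, m} := by
    rw [hfact, Polynomial.roots_mul (mul_ne_zero (X_sub_C_ne_zero l) (X_sub_C_ne_zero m)),
      roots_X_sub_C, roots_X_sub_C]
    rfl
  rw [jensenSquareSum, hroots]
  simp

lemma arsinh_half (u T2 : ℝ) (hT : 0 ≤ T2) (h : 1 + (u/2)^2 = T2^2) :
    Real.arsinh (u/2) = Real.log (u/2 + T2) := by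
  rw [← Real.log_exp (Real.arsinh (u/2)), Real.exp_arsinh]
  congr 2
  rw [h]
  exact Real.sqrt_sq hT

lemma jensen_eq (t : ℝ) :
    Real.sqrt (jensenSquareSum ((X:ℂ[X])^2 - C (t:ℂ) * X + C 1))
      = Real.arsinh (Real.sqrt (max 0 (t^2 - 4)) / 2) := by
  rcases le_or_gt (t^2) 4 with h4 | h4
  · have hmax : max 0 (t^2-4) = 0 := max_eq_left (by linarith)
    set u := Real.sqrt (4 - t^2) with hudef
    have hu2 : u^2 = 4 - t^2 := Real.sq_sqrt (by linarith)
    set l : ℂ := ((t/2 : ℝ):ℂ) + ((u/2 : ℝ):ℂ)*Complex.I with hldef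
    set m : ℂ := ((t/2 : ℝ):ℂ) - ((u/2 : ℝ):ℂ)*Complex.I with hmdef
    have hsum : l + m = (t:ℂ) := by rw [hldef, hmdef]; push_cast; ring
    have hc : ((u:ℝ):ℂ)^2 = 4 - ((t:ℝ):ℂ)^2 := by
      exact_mod_cast congrArg (Complex.ofReal) hu2
    have hprod : l * m = 1 := by
      rw [hldef, hmdef]
      push_cast
      linear_combination (-(((u:ℝ):ℂ)/2)^2) * Complex.I_sq + (1/4 : ℂ) * hc
    have habsl : ‖l‖ = 1 := by
      rw [hldef, Complex.norm_def]
      have : Complex.normSq (((t/2 : ℝ):ℂ) + ((u/2 : ℝ):ℂ)*Complex.I) = 1 := by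
        simp [Complex.normSq_apply]
        nlinarith [hu2]
      rw [this, Real.sqrt_one]
    have habsm : ‖m‖ = 1 := by
      rw [hmdef, Complex.norm_def]
      have : Complex.normSq (((t/2 : ℝ):ℂ) - ((u/2 : ℝ):ℂ)*Complex.I) = 1 := by
        simp [Complex.normSq_apply]
        nlinarith [hu2]
      rw [this, Real.sqrt_one]
    rw [jss_eq (t:ℂ) l m hsum hprod, habsl, habsm, hmax]
    simp
  · have h40 : (0:ℝ) ≤ t^2 - 4 := by linarith
    set u := Real.sqrt (t^2-4) with hudef
    have hu2 : u^2 = t^2-4 := Real.sq_sqrt h40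
    have hu0 : 0 ≤ u := Real.sqrt_nonneg _
    have hmax : max 0 (t^2-4) = t^2-4 := max_eq_right h40
    set l : ℂ := (((t+u)/2 : ℝ):ℂ) with hldef
    set m : ℂ := (((t-u)/2 : ℝ):ℂ) with hmdef
    have hsum : l + m = (t:ℂ) := by rw [hldef, hmdef]; push_cast; ring
    have hprodR : ((t+u)/2) * ((t-u)/2) = (1:ℝ) := by linear_combination (-1/4) * hu2
    have hprod : l * m = 1 := by
      rw [hldef, hmdef]
      exact_mod_cast congrArg (Complex.ofReal) hprodR
    have habsl : ‖l‖ = |(t+u)/2| := by rw [hldef, Complex.norm_real, Real.norm_eq_abs]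
    have habsm : ‖m‖ = |(t-u)/2| := by rw [hmdef, Complex.norm_real, Real.norm_eq_abs]
    rw [jss_eq (t:ℂ) l m hsum hprod, habsl, habsm, hmax, hudef]
    rcases lt_or_ge 0 t with ht | ht
    · have h2t : 2 < t := by nlinarith
      have hut : u < t := by nlinarith
      have hl1 : (1:ℝ) ≤ (t+u)/2 := by linarith
      have hm0 : (0:ℝ) < (t-u)/2 := by linarith
      have hm1 : (t-u)/2 ≤ 1 := by nlinarith
      rw [abs_of_nonneg (by linarith : (0:ℝ) ≤ (t+u)/2), abs_of_nonneg hm0.le,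
        max_eq_right hl1, max_eq_left hm1]
      rw [Real.log_one]
      rw [show (Real.log ((t+u)/2))^2 + (0:ℝ)^2 = (Real.log ((t+u)/2))^2 by ring]
      rw [Real.sqrt_sq (Real.log_nonneg hl1)]
      rw [← hudef, arsinh_half u (t/2) (by linarith) (by linear_combination (1/4) * hu2)]
      congr 1
      ring
    · have ht0 : t < 0 := by nlinarith
      have h2t : t < -2 := by nlinarith
      have hut : u < -t := by nlinarith
      have hl0 : (t+u)/2 ≤ 0 := by linarith
      have hl1 : -((t+u)/2) ≤ 1 := by nlinarith [hu2, hu0]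
      have hm1 : (1:ℝ) ≤ -((t-u)/2) := by linarith
      rw [abs_of_nonpos hl0, abs_of_nonpos (by linarith : (t-u)/2 ≤ 0),
        max_eq_left hl1, max_eq_right hm1]
      rw [Real.log_one]
      rw [show (0:ℝ)^2 + (Real.log (-((t-u)/2)))^2 = (Real.log (-((t-u)/2)))^2 by ring]
      rw [Real.sqrt_sq (Real.log_nonneg hm1)]
      rw [← hudef, arsinh_half u (-t/2) (by linarith) (by linear_combination (1/4) * hu2)]
      congr 1
      ring

lemma charpoly_two (A : SL(2,ℝ)) :
    (Matrix.charpoly (A : Matrix (Fin 2) (Fin 2) ℝ)).map (algebraMap ℝ ℂ)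
      = (X:ℂ[X])^2 - C ((A 0 0 + A 1 1 : ℝ):ℂ) * X + C 1 := by
  have hdet : A 0 0 * A 1 1 - A 0 1 * A 1 0 = 1 := by
    have := A.2
    rw [Matrix.det_fin_two] at this
    exact this
  have h : Matrix.charpoly (A : Matrix (Fin 2) (Fin 2) ℝ)
      = (X:ℝ[X])^2 - C (A 0 0 + A 1 1 : ℝ) * X + C 1 := by
    rw [Matrix.charpoly, Matrix.det_fin_two]
    simp [Matrix.charmatrix_apply_eq, Matrix.charmatrix_apply_ne]
    have h1 : (C (A 0 0) * C (A 1 1) - C (A 0 1) * C (A 1 0) : ℝ[X]) = C 1 := by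
      rw [← C_mul, ← C_mul, ← C_sub, hdet]
    linear_combination h1 + (Polynomial.C_1 (R := ℝ))
  rw [h]
  simp [Polynomial.map_pow, Polynomial.map_mul, Polynomial.map_sub, Polynomial.map_add]

end TransLenAux

/-- The translation length of any element of `SL(2, ℝ)` on the hyperbolic upper
half-plane equals `2 √(w(P_A))`, where `P_A` is the characteristic polynomial of `A`
and `w` is the Jensen square sum. -/
theorem translationLength_SL2_eq_two_sqrt_jensen (A : SL(2, ℝ)) :
    (⨅ z : ℍ, dist z (A • z)) =
      2 * Real.sqrt (jensenSquareSum
        ((Matrix.charpoly (A : Matrix (Fin 2) (Fin 2) ℝ)).map (algebraMap ℝ ℂ))) := by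
  have hdet : A 0 0 * A 1 1 - A 0 1 * A 1 0 = 1 := by
    have := A.2
    rw [Matrix.det_fin_two] at this
    exact this
  set a : ℝ := A 0 0
  set b : ℝ := A 0 1
  set c : ℝ := A 1 0
  set d : ℝ := A 1 1
  set s : ℝ := Real.sqrt (max 0 ((a+d)^2-4)) with hs
  set g : ℍ → ℝ := fun z =>
    ‖(c:ℂ)*(z:ℂ)^2 + ((d:ℂ)-a)*(z:ℂ) - b‖ / (2*z.im) with hg
  have hlow : ∀ z : ℍ, s/2 ≤ g z := by
    intro z
    have := TransLenAux.qlow a b c d hdet (z:ℂ) (by rw [UpperHalfPlane.coe_im]; exact z.2)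
    rwa [UpperHalfPlane.coe_im] at this
  have hbdd : BddBelow (Set.range g) := by
    refine ⟨s/2, ?_⟩
    rintro x ⟨z, rfl⟩
    exact hlow z
  have hginf : (⨅ z : ℍ, g z) = s/2 := by
    refine le_antisymm ?_ (le_ciInf hlow)
    by_contra h
    push_neg at h
    obtain ⟨z, hz⟩ := TransLenAux.qex a b c d hdet (ε := (⨅ z : ℍ, g z) - s/2) (by linarith)
    have hle := ciInf_le hbdd z
    have hz' : g z < s/2 + ((⨅ z : ℍ, g z) - s/2) := hz
    have : iInf g = ⨅ z : ℍ, g z := rfl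
    linarith [hle, hz']
  have hdist : ∀ z : ℍ, dist z (A • z) = 2 * Real.arsinh (g z) :=
    fun z => TransLenAux.dist_smul_eq A z
  calc (⨅ z : ℍ, dist z (A • z))
      = ⨅ z : ℍ, 2 * Real.arsinh (g z) := iInf_congr hdist
    _ = 2 * Real.arsinh (⨅ z : ℍ, g z) := by
        refine (Monotone.map_ciInf_of_continuousAt (f := fun x : ℝ => 2 * Real.arsinh x)
          ((continuous_const.mul Real.continuous_arsinh).continuousAt) ?_ hbdd).symm
        exact fun x y hxy => by
          have := Real.arsinh_le_arsinh.mpr hxy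
          simpa using (by linarith : 2 * Real.arsinh x ≤ 2 * Real.arsinh y)
    _ = 2 * Real.arsinh (s/2) := by rw [hginf]
    _ = 2 * Real.sqrt (jensenSquareSum
        ((Matrix.charpoly (A : Matrix (Fin 2) (Fin 2) ℝ)).map (algebraMap ℝ ℂ))) := by
        rw [TransLenAux.charpoly_two A, TransLenAux.jensen_eq (a+d), hs]
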